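/- Let 𝒜 be a finite set, η > 0, and let ψ(p) = −(2/η) Σ_{a∈𝒜} √(p(a)) (the Tsallis entropy regularizer). Let p_t ∈ Δ(𝒜) with p_t(a) > 0 for every a, and let ℓ ∈ ℝ^𝒜 satisfy η √(p_t(a)) ℓ(a) ≥ −1/2 for every a. Then max_{p ∈ Δ(𝒜)} { ⟨p_t − p, ℓ⟩ − D_ψ(p, p_t) } ≤ 2η Σ_{a∈𝒜} p_t(a)^{3/2} ℓ(a)². -/

import Mathlib

open Finset

private lemma key_poly (s r u : ℝ) (hr : 0 ≤ r) (hu : -(1/2) ≤ u) :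
    (s^2 - r^2)*u + 2*s*r - s^2 - r^2 ≤ 2*s^2*u^2 := by
  have h1 : 0 < 1 + u := by linarith
  nlinarith [sq_nonneg ((1+u)*r - s),
    mul_nonneg (mul_nonneg (sq_nonneg s) (sq_nonneg u)) (by linarith : (0:ℝ) ≤ 1 + 2*u)]

private lemma key_pt (η s c x : ℝ) (hη : 0 < η) (hs : 0 < s) (hx : 0 ≤ x)
    (hc : -(1/2) ≤ η * s * c) :
    (s^2 - x)*c + (2/η)*(Real.sqrt x - s) - (1/η)*(x - s^2)/s ≤ 2*η*s^3*c^2 := by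
  set r := Real.sqrt x with hrdef
  have hr : 0 ≤ r := Real.sqrt_nonneg x
  have hrx : r^2 = x := Real.sq_sqrt hx
  have hpoly := key_poly s r (η*s*c) hr hc
  have hηs : 0 < η * s := mul_pos hη hs
  rw [← hrx]
  have h2 : (s^2 - r^2)*c + 2/η*(r-s) - 1/η*(r^2-s^2)/s
      = ((s^2 - r^2)*(η*s*c) + 2*s*r - s^2 - r^2)/(η*s) := by
    field_simp; ring
  have h3 : 2*η*s^3*c^2 = (2*s^2*(η*s*c)^2)/(η*s) := by field_simp
  rw [h2, h3]
  exact div_le_div_of_nonneg_right hpoly hηs.le |>.trans_eq rfl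

/-- **Stability under the Tsallis entropy regularizer.**
Let `ψ p = -(2/η) ∑ a, √(p a)` with `η > 0`, let `pt` be a point of the probability
simplex with strictly positive coordinates, and let `ℓ` satisfy
`η √(pt a) ℓ a ≥ -1/2` for every `a`.  Then for every `p` in the probability simplex,
`⟨pt - p, ℓ⟩ - D_ψ(p, pt) ≤ 2 η ∑ a, (pt a)^{3/2} (ℓ a)²`, where
`D_ψ(p, pt) = ψ p - ψ pt - ⟨∇ψ(pt), p - pt⟩`. -/
theorem tsallis_entropy_stability
    {𝒜 : Type*} [Fintype 𝒜]
    (η : ℝ) (hη : 0 < η)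
    (ψ : (𝒜 → ℝ) → ℝ)
    (hψ : ψ = fun p : 𝒜 → ℝ => -(2 / η) * ∑ a, Real.sqrt (p a))
    (pt : 𝒜 → ℝ) (hpt_pos : ∀ a, 0 < pt a) (hpt_sum : ∑ a, pt a = 1)
    (ℓ : 𝒜 → ℝ) (hℓ : ∀ a, η * Real.sqrt (pt a) * ℓ a ≥ -(1 / 2)) :
    ∀ p : 𝒜 → ℝ, (∀ a, 0 ≤ p a) → ∑ a, p a = 1 →
      (∑ a, (pt a - p a) * ℓ a) - (ψ p - ψ pt - fderiv ℝ ψ pt (p - pt))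
        ≤ 2 * η * ∑ a, pt a ^ ((3 : ℝ) / 2) * ℓ a ^ 2 := by
  subst hψ
  intro p hp hps
  -- compute the derivative
  have hFD : HasFDerivAt (fun p : 𝒜 → ℝ => -(2 / η) * ∑ a, Real.sqrt (p a))
      ((-(2/η)) • ∑ a : 𝒜,
        (1/(2*Real.sqrt (pt a))) • (ContinuousLinearMap.proj a : (𝒜 → ℝ) →L[ℝ] ℝ)) pt := by
    refine HasFDerivAt.const_mul ?_ _
    refine HasFDerivAt.fun_sum fun a _ => ?_
    exact (Real.hasDerivAt_sqrt (hpt_pos a).ne').comp_hasFDerivAt pt (hasFDerivAt_apply a pt)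
  rw [hFD.fderiv]
  have happ : ((-(2/η)) • ∑ a : 𝒜,
      (1/(2*Real.sqrt (pt a))) • (ContinuousLinearMap.proj a : (𝒜 → ℝ) →L[ℝ] ℝ)) (p - pt)
      = ∑ a : 𝒜, (-(1/η)) * ((p a - pt a) / Real.sqrt (pt a)) := by
    simp only [ContinuousLinearMap.smul_apply, ContinuousLinearMap.sum_apply,
      ContinuousLinearMap.proj_apply, Pi.sub_apply, smul_eq_mul, Finset.mul_sum]
    refine Finset.sum_congr rfl fun a _ => ?_
    field_simp
  rw [happ]
  have hsqrt_pos : ∀ a, 0 < Real.sqrt (pt a) := fun a => Real.sqrt_pos.mpr (hpt_pos a)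
  have hrpow : ∀ a, pt a ^ ((3:ℝ)/2) = Real.sqrt (pt a) ^ 3 := by
    intro a
    rw [Real.sqrt_eq_rpow, ← Real.rpow_natCast (pt a ^ ((1:ℝ)/2)) 3,
      ← Real.rpow_mul (hpt_pos a).le]
    norm_num
  calc (∑ a, (pt a - p a) * ℓ a) -
        ((-(2 / η) * ∑ a, Real.sqrt (p a)) - (-(2 / η) * ∑ a, Real.sqrt (pt a))
          - ∑ a : 𝒜, (-(1/η)) * ((p a - pt a) / Real.sqrt (pt a)))
      = ∑ a, ((Real.sqrt (pt a)^2 - p a) * ℓ a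
          + (2/η) * (Real.sqrt (p a) - Real.sqrt (pt a))
          - (1/η) * (p a - Real.sqrt (pt a)^2) / Real.sqrt (pt a)) := by
        rw [Finset.mul_sum, Finset.mul_sum, ← Finset.sum_sub_distrib,
          ← Finset.sum_sub_distrib, ← Finset.sum_sub_distrib]
        refine Finset.sum_congr rfl fun a _ => ?_
        rw [Real.sq_sqrt (hpt_pos a).le]
        have h1 : Real.sqrt (pt a) ≠ 0 := (Real.sqrt_pos.mpr (hpt_pos a)).ne'
        field_simp
        ring
    _ ≤ ∑ a, 2*η*(Real.sqrt (pt a))^3*(ℓ a)^2 := by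
        refine Finset.sum_le_sum fun a _ => ?_
        exact key_pt η (Real.sqrt (pt a)) (ℓ a) (p a) hη (hsqrt_pos a) (hp a) (hℓ a)
    _ = 2 * η * ∑ a, pt a ^ ((3:ℝ)/2) * ℓ a ^ 2 := by
        rw [Finset.mul_sum]
        exact Finset.sum_congr rfl fun a _ => by rw [hrpow a]; ring
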